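/- Fix a natural number p ≥ 1 and a real κ with 0 < κ ≤ 1, and let Q := {x ∈ (Fin p → ℝ) : ∀ i, 0 ≤ x_i ≤ 1} equipped with Lebesgue measure (so Q has measure 1). There exists a constant C > 0, depending only on κ and p, such that for every ε with 0 < ε < 1 there is a finite set S of measurable functions g : (Fin p → ℝ) → ℝ with cardinality at most exp(C · ε^{−p/κ}), such that for every measurable f : (Fin p → ℝ) → ℝ with f ≥ 0 on Q, ∫_Q f dvol = 1, and whose square root satisfies |√(f(x)) − √(f(y))| ≤ (dist x y)^κ for all x, y ∈ Q, there exists g ∈ S with ∫_Q (√(f(x)) − √(g(x)))² dvol ≤ ε². -/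

import Mathlib

open MeasureTheory

/-- The unit cube `[0,1]^p` in `ℝ^p`. -/
def unitCube (p : ℕ) : Set (Fin p → ℝ) := {x | ∀ i, 0 ≤ x i ∧ x i ≤ 1}

namespace HEnt

variable {p N : ℕ}

/-- representative point of a grid cell -/
noncomputable def pt (p N : ℕ) (c : Fin p → Fin N) : Fin p → ℝ := fun i => (c i : ℝ) / N

/-- grid cell index of a point -/
noncomputable def idx (p N : ℕ) (hN : 0 < N) (x : Fin p → ℝ) : Fin p → Fin N :=
  fun i => ⟨min ⌊(N : ℝ) * x i⌋₊ (N - 1), by omega⟩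

/-- predecessor cell: decrement some nonzero coordinate -/
noncomputable def pred (c : Fin p → Fin N) : Fin p → Fin N :=
  if h : ∃ i, (c i : ℕ) ≠ 0 then
    Function.update c h.choose ⟨(c h.choose : ℕ) - 1, by have := (c h.choose).isLt; omega⟩
  else c

def w (c : Fin p → Fin N) : ℕ := ∑ i, (c i : ℕ)

lemma w_pred (c : Fin p → Fin N) (h : ∃ i, (c i : ℕ) ≠ 0) : w (pred c) < w c := by
  classical
  unfold pred
  rw [dif_pos h]
  have hne : (c h.choose : ℕ) ≠ 0 := h.choose_spec
  set i := h.choose with hi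
  set v : Fin N := ⟨(c i : ℕ) - 1, by have := (c i).isLt; omega⟩ with hv
  have hvv : (v : ℕ) = (c i : ℕ) - 1 := rfl
  unfold w
  have hrw : ∀ j, ((Function.update c i v j : Fin N) : ℕ)
      = Function.update (fun j => (c j : ℕ)) i (v : ℕ) j := fun j => by
    rcases eq_or_ne j i with rfl | hj
    · simp
    · simp [Function.update_of_ne hj]
  rw [Finset.sum_congr rfl fun j _ => hrw j,
    Finset.sum_update_of_mem (Finset.mem_univ i), Finset.sdiff_singleton_eq_erase,
    ← Finset.add_sum_erase _ _ (Finset.mem_univ i)]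
  have hlt : (v : ℕ) < (c i : ℕ) := by omega
  omega

lemma pt_mem (hN : 0 < N) (c : Fin p → Fin N) : pt p N c ∈ unitCube p := by
  intro i
  have h1 : (c i : ℕ) < N := (c i).isLt
  have hN' : (0 : ℝ) < N := by positivity
  unfold pt
  constructor
  · positivity
  · rw [div_le_one hN']
    exact_mod_cast h1.le

lemma dist_pt_pred (hN : 0 < N) (c : Fin p → Fin N) :
    dist (pt p N (pred c)) (pt p N c) ≤ 1 / N := by
  have hN' : (0 : ℝ) < N := by positivity
  rw [dist_pi_le_iff (by positivity)]
  intro j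
  rw [Real.dist_eq]
  unfold pt pred
  split_ifs with h
  · have hne : (c h.choose : ℕ) ≠ 0 := h.choose_spec
    rcases eq_or_ne j h.choose with heq | hj
    · rw [heq, Function.update_self]
      have h1 : (((⟨(c h.choose : ℕ) - 1, by have := (c h.choose).isLt; omega⟩ : Fin N) : ℕ) : ℝ)
          = (c h.choose : ℕ) - 1 := by
        rw [Nat.cast_sub (by omega : 1 ≤ (c h.choose : ℕ))]
        norm_num
      rw [h1]
      have h2 : ((c h.choose : ℕ) - 1 : ℝ) / N - ((c h.choose : ℕ) : ℝ) / N = -(1 / N) := by ring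
      rw [h2, abs_neg, abs_of_nonneg (by positivity)]
    · rw [Function.update_of_ne hj, sub_self, abs_zero]
      positivity
  · rw [sub_self, abs_zero]
    positivity

lemma idx_coord (hN : 0 < N) {a : ℝ} (ha0 : 0 ≤ a) (ha1 : a ≤ 1) :
    |a - ((min ⌊(N : ℝ) * a⌋₊ (N - 1) : ℕ) : ℝ) / N| ≤ 1 / N := by
  have hN' : (0 : ℝ) < N := by positivity
  set m := ⌊(N : ℝ) * a⌋₊ with hm
  have hfl : (m : ℝ) ≤ N * a := Nat.floor_le (by positivity)
  have hfl2 : (N : ℝ) * a < m + 1 := Nat.lt_floor_add_one _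
  rcases le_or_gt m (N - 1) with hc | hc
  · rw [min_eq_left hc, abs_le]
    have hb1 : (m : ℝ) / N ≤ a := by rw [div_le_iff₀ hN']; nlinarith
    have hb2 : a ≤ ((m : ℝ) + 1) / N := by rw [le_div_iff₀ hN']; nlinarith
    have hb3 : ((m : ℝ) + 1) / N - (m : ℝ) / N = 1 / N := by ring
    constructor
    · have : (0 : ℝ) < 1 / N := by positivity
      linarith
    · linarith
  · rw [min_eq_right hc.le]
    have hm2 : (N : ℕ) ≤ m := by omega
    have hNm : (N : ℝ) ≤ N * a := le_trans (by exact_mod_cast hm2) hfl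
    have ha : a = 1 := le_antisymm ha1 (by nlinarith)
    subst ha
    have h3 : ((N - 1 : ℕ) : ℝ) = (N : ℝ) - 1 := by
      rw [Nat.cast_sub hN]
      norm_num
    rw [h3]
    have h4 : (1 : ℝ) - ((N : ℝ) - 1) / N = 1 / N := by field_simp; ring
    rw [h4, abs_of_nonneg (by positivity)]

lemma dist_idx (hN : 0 < N) {x : Fin p → ℝ} (hx : x ∈ unitCube p) :
    dist x (pt p N (idx p N hN x)) ≤ 1 / N := by
  rw [dist_pi_le_iff (by positivity)]
  intro i
  rw [Real.dist_eq]
  exact idx_coord hN (hx i).1 (hx i).2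

lemma measurable_idxfun (hN : 0 < N) (u : (Fin p → Fin N) → ℝ) :
    Measurable (fun x : Fin p → ℝ => u (idx p N hN x)) := by
  have h1 : Measurable (idx p N hN) := by
    apply measurable_pi_lambda
    intro i
    have hfloor : Measurable (fun x : Fin p → ℝ => ⌊(N : ℝ) * x i⌋₊) :=
      (measurable_const.mul (measurable_pi_apply i)).nat_floor
    exact (measurable_of_countable
      (fun n : ℕ => (⟨min n (N - 1), by omega⟩ : Fin N))).comp hfloor
  exact (measurable_of_countable u).comp h1

lemma inj_aux {K : ℕ} (c0 : Fin p → Fin N) (hc0 : ∀ i, (c0 i : ℕ) = 0)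
    (φ ψ : (Fin p → Fin N) → Fin K)
    (hbase : φ c0 = ψ c0)
    (hstep : ∀ c, (φ c : ℕ) + 2 - (φ (pred c) : ℕ) = (ψ c : ℕ) + 2 - (ψ (pred c) : ℕ))
    (hφ : ∀ c, (φ (pred c) : ℕ) ≤ (φ c : ℕ) + 2)
    (hψ : ∀ c, (ψ (pred c) : ℕ) ≤ (ψ c : ℕ) + 2) :
    φ = ψ := by
  have main : ∀ n, ∀ c, w c ≤ n → φ c = ψ c := by
    intro n
    induction n with
    | zero =>
      intro c hc
      have : c = c0 := by
        funext i
        have hz : (c i : ℕ) = 0 := by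
          have := Finset.sum_eq_zero_iff.1 (Nat.le_zero.1 hc) i (Finset.mem_univ i)
          exact this
        exact Fin.ext (by rw [hz, hc0 i])
      rw [this]; exact hbase
    | succ n ih =>
      intro c hc
      by_cases h : ∃ i, (c i : ℕ) ≠ 0
      · have hw := w_pred c h
        have hpc : φ (pred c) = ψ (pred c) := ih (pred c) (by omega)
        have hval : ((φ (pred c) : ℕ)) = (ψ (pred c) : ℕ) := congrArg Fin.val hpc
        have := hstep c
        have h1 := hφ c
        have h2 := hψ c
        exact Fin.ext (by omega)
      · push_neg at h
        have : c = c0 := funext fun i => Fin.ext (by rw [h i, hc0 i])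
        rw [this]; exact hbase
  funext c
  exact main (w c) c le_rfl

lemma floor_le_floor_add_two {η a b : ℝ} (hη : 0 < η) (hb : 0 ≤ b) (hab : a ≤ b + η) :
    ⌊a / η⌋₊ ≤ ⌊b / η⌋₊ + 2 := by
  have h1 : a / η ≤ b / η + 1 := by
    have : b / η + 1 = (b + η) / η := by field_simp
    rw [this]
    exact by gcongr
  calc ⌊a / η⌋₊ ≤ ⌊b / η + 1⌋₊ := Nat.floor_mono h1
    _ = ⌊b / η⌋₊ + 1 := Nat.floor_add_one (by positivity)
    _ ≤ ⌊b / η⌋₊ + 2 := by omega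

end HEnt

set_option maxHeartbeats 1000000 in
/-- Hellinger-entropy bound for the class of probability densities on `[0,1]^p`
whose square roots lie in the unit Hölder ball with exponent `κ ∈ (0,1]`:
there is `C > 0` such that for every `0 < ε < 1` there is a finite set of
measurable functions of cardinality at most `exp (C ε^{-p/κ})` which is an
`ε`-net in Hellinger distance. -/
theorem hellinger_entropy_holder_densities
    (p : ℕ) (hp : 1 ≤ p) (κ : ℝ) (hκ0 : 0 < κ) (hκ1 : κ ≤ 1) :
    ∃ C : ℝ, 0 < C ∧
      ∀ ε : ℝ, 0 < ε → ε < 1 →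
        ∃ S : Finset ((Fin p → ℝ) → ℝ),
          (∀ g ∈ S, Measurable g) ∧
          (S.card : ℝ) ≤ Real.exp (C * ε ^ (-(p : ℝ) / κ)) ∧
          ∀ f : (Fin p → ℝ) → ℝ, Measurable f →
            (∀ x ∈ unitCube p, 0 ≤ f x) →
            (∫ x in unitCube p, f x ∂volume) = 1 →
            (∀ x ∈ unitCube p, ∀ y ∈ unitCube p,
              |Real.sqrt (f x) - Real.sqrt (f y)| ≤ dist x y ^ κ) →
            ∃ g ∈ S,
              (∫ x in unitCube p, (Real.sqrt (f x) - Real.sqrt (g x)) ^ 2 ∂volume)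
                ≤ ε ^ 2 := by
  classical
  have hcube : unitCube p = Set.univ.pi (fun _ : Fin p => Set.Icc (0:ℝ) 1) := by
    ext x
    simp only [unitCube, Set.mem_setOf_eq, Set.mem_univ_pi, Set.mem_Icc]
  have hQmeas : MeasurableSet (unitCube p) := by
    rw [hcube]; exact MeasurableSet.univ_pi (fun _ => measurableSet_Icc)
  have hvol : volume (unitCube p) = 1 := by
    rw [hcube, volume_pi_pi]
    simp [Real.volume_Icc]
  have hvolne : volume (unitCube p) ≠ ⊤ := by rw [hvol]; exact ENNReal.one_ne_top
  have hvollt : volume (unitCube p) < ⊤ := by rw [hvol]; exact ENNReal.one_lt_top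
  refine ⟨14 + 2 * 2 ^ p * (4 : ℝ) ^ ((p : ℝ) / κ), by positivity, ?_⟩
  intro ε hε0 hε1
  have hκ' : κ ≠ 0 := hκ0.ne'
  set η : ℝ := ε / 4 with hηdef
  have hη : 0 < η := by positivity
  set B : ℝ := (4 / ε) ^ (1 / κ) with hBdef
  have h4ε : (1:ℝ) ≤ 4 / ε := by rw [le_div_iff₀ hε0]; linarith
  have hB1 : (1:ℝ) ≤ B := by
    calc (1:ℝ) = (4/ε) ^ (0:ℝ) := (Real.rpow_zero _).symm
    _ ≤ B := Real.rpow_le_rpow_of_exponent_le h4ε (by positivity)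
  have hB0 : (0:ℝ) < B := lt_of_lt_of_le one_pos hB1
  set N : ℕ := ⌈B⌉₊ with hNdef
  have hN : 0 < N := Nat.ceil_pos.2 hB0
  have hN' : (0:ℝ) < N := by exact_mod_cast hN
  have hNB : B ≤ (N:ℝ) := Nat.le_ceil B
  have hNle : (N : ℝ) ≤ 2 * B := by
    have := Nat.ceil_lt_add_one hB0.le
    have : (N:ℝ) < B + 1 := by exact_mod_cast this
    linarith
  have hmesh : (1 / (N:ℝ)) ^ κ ≤ η := by
    have h1 : (1:ℝ)/N ≤ 1/B := one_div_le_one_div_of_le hB0 hNB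
    have h2 : (1:ℝ)/B = (ε/4) ^ (1/κ) := by
      rw [one_div, hBdef, ← Real.inv_rpow (by positivity), inv_div]
    calc (1/(N:ℝ))^κ ≤ ((ε/4)^(1/κ))^κ := by
          rw [← h2]; exact Real.rpow_le_rpow (by positivity) h1 hκ0.le
      _ = η := by
          rw [← Real.rpow_mul (by positivity : (0:ℝ) ≤ ε/4), one_div,
            inv_mul_cancel₀ hκ', Real.rpow_one]
  set K : ℕ := ⌈12 / ε⌉₊ + 1 with hKdef
  have hfloorK : ∀ t : ℝ, t ≤ 3 → ⌊t / η⌋₊ < K := by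
    intro t ht
    have h1 : t / η ≤ 12 / ε := by
      rw [hηdef, div_div_eq_mul_div]
      exact (div_le_div_iff_of_pos_right hε0).2 (by linarith)
    have h2 : ⌊t/η⌋₊ ≤ ⌈12/ε⌉₊ := (Nat.floor_mono h1).trans (Nat.floor_le_ceil _)
    omega
  set c0 : Fin p → Fin N := fun _ => ⟨0, hN⟩ with hc0def
  set A : Finset ((Fin p → Fin N) → Fin K) := Finset.univ.filter
    (fun φ => ∀ c, (φ (HEnt.pred c) : ℕ) ≤ (φ c : ℕ) + 2 ∧
      (φ c : ℕ) ≤ (φ (HEnt.pred c) : ℕ) + 2) with hAdef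
  set Gmap : ((Fin p → Fin N) → Fin K) → ((Fin p → ℝ) → ℝ) :=
    fun φ => fun x => ((((φ (HEnt.idx p N hN x)) : ℕ) : ℝ) * η) ^ 2 with hGdef
  have hGmeas : ∀ φ, Measurable (Gmap φ) := fun φ =>
    HEnt.measurable_idxfun hN (fun c => ((((φ c) : ℕ) : ℝ) * η) ^ 2)
  refine ⟨A.image Gmap, ?_, ?_, ?_⟩
  · intro g hg
    obtain ⟨φ, _, rfl⟩ := Finset.mem_image.1 hg
    exact hGmeas φ
  · -- cardinality bound
    have hcard1 : (A.image Gmap).card ≤ A.card := Finset.card_image_le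
    have hcard2 : A.card ≤ K * 5 ^ (N ^ p) := by
      have hinjOn : Set.InjOn (fun φ : (Fin p → Fin N) → Fin K =>
          ((φ c0, fun c => (⟨min ((φ c : ℕ) + 2 - (φ (HEnt.pred c) : ℕ)) 4,
            Nat.lt_succ_of_le (min_le_right _ 4)⟩ : Fin 5)) :
            Fin K × ((Fin p → Fin N) → Fin 5))) ↑A := by
        intro φ hφ ψ hψ heq
        have hφ' := (Finset.mem_filter.1 (Finset.mem_coe.1 hφ)).2
        have hψ' := (Finset.mem_filter.1 (Finset.mem_coe.1 hψ)).2
        simp only [Prod.mk.injEq] at heq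
        obtain ⟨h1, h2⟩ := heq
        have hst : ∀ c, (φ c : ℕ) + 2 - (φ (HEnt.pred c) : ℕ)
            = (ψ c : ℕ) + 2 - (ψ (HEnt.pred c) : ℕ) := by
          intro c
          have h3 := congrFun h2 c
          simp only [Fin.mk.injEq] at h3
          have h4 := (hφ' c).2
          have h5 := (hψ' c).2
          omega
        exact HEnt.inj_aux c0 (fun i => rfl) φ ψ h1 hst
          (fun c => (hφ' c).1) (fun c => (hψ' c).1)
      have hinj := Finset.card_le_card_of_injOn (s := A)
        (t := (Finset.univ : Finset (Fin K × ((Fin p → Fin N) → Fin 5)))) _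
        (fun φ _ => Finset.mem_univ _) hinjOn
      calc A.card ≤ (Finset.univ : Finset (Fin K × ((Fin p → Fin N) → Fin 5))).card := hinj
        _ = K * 5 ^ (N ^ p) := by
          rw [Finset.card_univ, Fintype.card_prod, Fintype.card_fun]
          simp [Fintype.card_fun]
    set T : ℝ := ε ^ (-(p:ℝ)/κ) with hTdef
    have hT0 : 0 < T := Real.rpow_pos_of_pos hε0 _
    have hexp1 : -(p:ℝ)/κ ≤ -1 := by
      rw [neg_div, neg_le_neg_iff, le_div_iff₀ hκ0, one_mul]
      calc κ ≤ 1 := hκ1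
        _ ≤ (p:ℝ) := by exact_mod_cast hp
    have hεinvT : ε⁻¹ ≤ T := by
      rw [← Real.rpow_neg_one ε]
      exact Real.rpow_le_rpow_of_exponent_ge hε0 hε1.le hexp1
    have hinv1 : (1:ℝ) ≤ ε⁻¹ := (one_le_inv₀ hε0).2 hε1.le
    have hT1 : 1 ≤ T := hinv1.trans hεinvT
    have hKT : (K:ℝ) ≤ 14 * T := by
      have h1 : ((⌈12/ε⌉₊ : ℕ) : ℝ) < 12/ε + 1 := Nat.ceil_lt_add_one (by positivity)
      have h2 : (K:ℝ) = (⌈12/ε⌉₊ : ℕ) + 1 := by rw [hKdef]; push_cast; ring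
      have h3 : (2:ℝ) ≤ 2/ε := by rw [le_div_iff₀ hε0]; nlinarith
      have h4 : 12/ε + 2/ε = 14/ε := by ring
      have h5 : (K:ℝ) ≤ 14/ε := by linarith
      have h6 : (14:ℝ)/ε = 14 * ε⁻¹ := by ring
      have h7 : (14:ℝ) * ε⁻¹ ≤ 14 * T := by linarith
      linarith
    have hNpT : ((N:ℝ)) ^ p ≤ 2^p * (4:ℝ)^((p:ℝ)/κ) * T := by
      have h1 : ((N:ℝ))^p ≤ (2*B)^p := pow_le_pow_left₀ hN'.le hNle p
      have h2 : (2*B)^p = 2^p * B^p := mul_pow 2 B p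
      have h3 : B ^ p = (4/ε) ^ ((p:ℝ)/κ) := by
        rw [hBdef, ← Real.rpow_natCast ((4/ε) ^ (1/κ)) p,
          ← Real.rpow_mul (by positivity : (0:ℝ) ≤ 4/ε)]
        congr 1
        field_simp
      have h4 : (4/ε) ^ ((p:ℝ)/κ) = (4:ℝ)^((p:ℝ)/κ) * T := by
        rw [Real.div_rpow (by norm_num) hε0.le, hTdef, neg_div,
          Real.rpow_neg hε0.le, div_eq_mul_inv]
      calc ((N:ℝ))^p ≤ (2*B)^p := h1
        _ = 2^p * B^p := h2
        _ = 2^p * (4:ℝ)^((p:ℝ)/κ) * T := by rw [h3, h4]; ring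
    have h5exp : (5:ℝ) ≤ Real.exp 2 := by
      have h := Real.exp_one_gt_d9
      have h2 : Real.exp 2 = Real.exp 1 * Real.exp 1 := by
        rw [← Real.exp_add]; norm_num
      nlinarith
    calc ((A.image Gmap).card : ℝ) ≤ ((K * 5 ^ (N ^ p) : ℕ) : ℝ) := by
          exact_mod_cast hcard1.trans hcard2
      _ = (K:ℝ) * 5 ^ (N^p) := by push_cast; ring
      _ ≤ Real.exp (14 * T) * Real.exp (2 * ((N:ℝ)^p)) := by
          apply mul_le_mul ?_ ?_ (by positivity) (Real.exp_pos _).le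
          · exact hKT.trans (by linarith [Real.add_one_le_exp (14*T)])
          · calc (5:ℝ) ^ (N^p) ≤ (Real.exp 2) ^ (N^p) :=
                pow_le_pow_left₀ (by norm_num) h5exp _
              _ = Real.exp (2 * ((N:ℝ)^p)) := by
                  rw [← Real.exp_nat_mul]; congr 1; push_cast; ring
      _ ≤ Real.exp ((14 + 2 * 2 ^ p * (4 : ℝ) ^ ((p : ℝ) / κ)) * T) := by
          rw [← Real.exp_add]
          apply Real.exp_le_exp.2
          have h8 := mul_le_mul_of_nonneg_left hNpT (by norm_num : (0:ℝ) ≤ 2)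
          nlinarith
  · -- approximation
    intro f hf hf0 hfint1 hH
    have hzQ : (fun _ => (0:ℝ)) ∈ unitCube p := fun i => ⟨le_refl 0, zero_le_one⟩
    have hd1 : ∀ x ∈ unitCube p, ∀ y ∈ unitCube p, dist x y ≤ 1 := by
      intro x hx y hy
      rw [dist_pi_le_iff zero_le_one]
      intro i
      rw [Real.dist_eq, abs_le]
      obtain ⟨h1, h2⟩ := hx i
      obtain ⟨h3, h4⟩ := hy i
      constructor <;> linarith
    have hH1 : ∀ x ∈ unitCube p, ∀ y ∈ unitCube p,
        |Real.sqrt (f x) - Real.sqrt (f y)| ≤ 1 := by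
      intro x hx y hy
      refine (hH x hx y hy).trans ?_
      exact Real.rpow_le_one dist_nonneg (hd1 x hx y hy) hκ0.le
    set z : Fin p → ℝ := fun _ => 0 with hzdef
    have hup : ∀ x ∈ unitCube p, Real.sqrt (f x) ≤ Real.sqrt (f z) + 1 := by
      intro x hx
      have := hH1 x hx z hzQ
      rw [abs_le] at this
      linarith [this.2]
    have hfub : ∀ x ∈ unitCube p, f x ≤ (Real.sqrt (f z) + 1)^2 := by
      intro x hx
      have h1 : f x = (Real.sqrt (f x))^2 := (Real.sq_sqrt (hf0 x hx)).symm
      rw [h1]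
      exact pow_le_pow_left₀ (Real.sqrt_nonneg _) (hup x hx) 2
    have hfInt : IntegrableOn f (unitCube p) volume := by
      apply Measure.integrableOn_of_bounded hvolne hf.aestronglyMeasurable
        (M := (Real.sqrt (f z) + 1)^2)
      rw [ae_restrict_iff' hQmeas]
      exact ae_of_all _ fun x hx => by
        rw [Real.norm_eq_abs, abs_of_nonneg (hf0 x hx)]; exact hfub x hx
    have hsz : Real.sqrt (f z) ≤ 2 := by
      by_contra hm
      push_neg at hm
      have hlow : ∀ x ∈ unitCube p, (Real.sqrt (f z) - 1)^2 ≤ f x := by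
        intro x hx
        have h1 := hH1 z hzQ x hx
        rw [abs_le] at h1
        have h2 : Real.sqrt (f z) - 1 ≤ Real.sqrt (f x) := by linarith [h1.2]
        have h3 : f x = (Real.sqrt (f x))^2 := (Real.sq_sqrt (hf0 x hx)).symm
        rw [h3]
        exact pow_le_pow_left₀ (by linarith) h2 2
      have hmono := setIntegral_mono_on
        (integrableOn_const hvolne) hfInt hQmeas hlow
      rw [setIntegral_const, hfint1, measureReal_def, hvol] at hmono
      simp at hmono
      rw [abs_le] at hmono
      linarith [hmono.2]
    have hub3 : ∀ x ∈ unitCube p, Real.sqrt (f x) ≤ 3 := fun x hx => by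
      have := hup x hx; linarith
    set φf : (Fin p → Fin N) → Fin K := fun c =>
      ⟨⌊Real.sqrt (f (HEnt.pt p N c)) / η⌋₊,
        hfloorK _ (hub3 _ (HEnt.pt_mem hN c))⟩ with hφfdef
    have hstepf : ∀ c, |Real.sqrt (f (HEnt.pt p N (HEnt.pred c)))
        - Real.sqrt (f (HEnt.pt p N c))| ≤ η := by
      intro c
      refine (hH _ (HEnt.pt_mem hN _) _ (HEnt.pt_mem hN c)).trans ?_
      calc dist (HEnt.pt p N (HEnt.pred c)) (HEnt.pt p N c) ^ κ
          ≤ (1/(N:ℝ)) ^ κ :=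
            Real.rpow_le_rpow dist_nonneg (HEnt.dist_pt_pred hN c) hκ0.le
        _ ≤ η := hmesh
    have hφfA : φf ∈ A := by
      rw [hAdef, Finset.mem_filter]
      refine ⟨Finset.mem_univ _, fun c => ?_⟩
      have h1 := hstepf c
      rw [abs_le] at h1
      constructor
      · exact HEnt.floor_le_floor_add_two hη (Real.sqrt_nonneg _) (by linarith [h1.2])
      · exact HEnt.floor_le_floor_add_two hη (Real.sqrt_nonneg _) (by linarith [h1.1])
    refine ⟨Gmap φf, Finset.mem_image_of_mem _ hφfA, ?_⟩
    have happrox : ∀ x ∈ unitCube p,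
        (Real.sqrt (f x) - Real.sqrt (Gmap φf x))^2 ≤ ε^2 := by
      intro x hx
      have hv0 : (0:ℝ) ≤ ((φf (HEnt.idx p N hN x) : ℕ) : ℝ) * η := by positivity
      have hsq : Real.sqrt (Gmap φf x) = ((φf (HEnt.idx p N hN x) : ℕ) : ℝ) * η := by
        simp only [hGdef]
        exact Real.sqrt_sq hv0
      set c := HEnt.idx p N hN x with hcdef
      set b := Real.sqrt (f (HEnt.pt p N c)) with hbdef
      set v : ℝ := ((φf c : ℕ) : ℝ) * η with hvdef
      have h1 : |Real.sqrt (f x) - b| ≤ η := by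
        refine (hH x hx _ (HEnt.pt_mem hN c)).trans ?_
        calc dist x (HEnt.pt p N c) ^ κ ≤ (1/(N:ℝ))^κ :=
            Real.rpow_le_rpow dist_nonneg (HEnt.dist_idx hN hx) hκ0.le
          _ ≤ η := hmesh
      have hvval : v = (⌊b / η⌋₊ : ℕ) * η := rfl
      have hb0 : 0 ≤ b := Real.sqrt_nonneg _
      have h2 : v ≤ b := by
        rw [hvval]
        have hfl := Nat.floor_le (show (0:ℝ) ≤ b/η by positivity)
        calc ((⌊b/η⌋₊ : ℕ):ℝ) * η ≤ (b/η) * η := mul_le_mul_of_nonneg_right hfl hη.le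
          _ = b := by field_simp
      have h3 : b ≤ v + η := by
        have h4 : b / η < (⌊b/η⌋₊ : ℕ) + 1 := Nat.lt_floor_add_one _
        have h4' : b < (((⌊b/η⌋₊ : ℕ):ℝ) + 1) * η := (div_lt_iff₀ hη).1 h4
        rw [hvval]
        nlinarith
      have h5 : |Real.sqrt (f x) - v| ≤ 2*η := by
        rw [abs_le] at h1 ⊢
        constructor <;> [linarith [h1.1]; linarith [h1.2]]
      rw [hsq]
      rw [abs_le] at h5
      have h6 : (Real.sqrt (f x) - v)^2 ≤ (2*η)^2 := sq_le_sq' (by linarith [h5.1]) h5.2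
      rw [hηdef] at h6
      nlinarith
    have hGm := hGmeas φf
    have hFmeas : Measurable (fun x => (Real.sqrt (f x) - Real.sqrt (Gmap φf x))^2) :=
      ((hf.sqrt.sub hGm.sqrt).pow_const 2)
    have hFint : IntegrableOn
        (fun x => (Real.sqrt (f x) - Real.sqrt (Gmap φf x))^2) (unitCube p) volume := by
      apply Measure.integrableOn_of_bounded hvolne hFmeas.aestronglyMeasurable (M := ε^2)
      rw [ae_restrict_iff' hQmeas]
      exact ae_of_all _ fun x hx => by
        rw [Real.norm_eq_abs, abs_of_nonneg (sq_nonneg _)]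
        exact happrox x hx
    calc (∫ x in unitCube p, (Real.sqrt (f x) - Real.sqrt (Gmap φf x))^2 ∂volume)
        ≤ ∫ _x in unitCube p, ε^2 ∂volume :=
          setIntegral_mono_on hFint (integrableOn_const hvolne) hQmeas happrox
      _ = ε^2 := by rw [setIntegral_const, measureReal_def, hvol]; simp
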